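/- arXiv:1405.0507 — 2 statements merged into one kernel-verified Lean document; each statement's English description precedes it below -/
import Mathlib

section
/- For every real x and all integers n ≥ 0, r ≥ 0, the neutrix limit as ε → 0⁺ of ∫_{1/2}^{1−ε} (1−t)^x (log t)^n (log(1−t))^r dt exists; that is, there exist a real number c and a negligible function N(ε) such that ∫_{1/2}^{1−ε} (1−t)^x (log t)^n (log(1−t))^r dt − N(ε) tends to c as ε → 0⁺. -/
open MeasureTheory Real Filter Set

/-- A negligible function: a finite real linear combination of `ε ↦ ε^λ (log ε)^k`
with `λ < 0` real and `k ∈ ℕ`, and `ε ↦ (log ε)^k` with `k ≥ 1`. -/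
def Negligible (N : ℝ → ℝ) : Prop :=
  ∃ (s : Finset (ℝ × ℕ)) (c : ℝ × ℕ → ℝ) (T : Finset ℕ) (d : ℕ → ℝ),
    (∀ p ∈ s, p.1 < 0) ∧ (∀ k ∈ T, 1 ≤ k) ∧
    ∀ ε : ℝ, N ε = (∑ p ∈ s, c p * ε ^ p.1 * Real.log ε ^ p.2) +
      ∑ k ∈ T, d k * Real.log ε ^ k

/-- `NeutrixLim F c` : the neutrix limit of `F ε` as `ε → 0⁺` is `c`, i.e. there is a
negligible function `N` with `F ε − N ε → c` as `ε → 0⁺`. -/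
def NeutrixLim (F : ℝ → ℝ) (c : ℝ) : Prop :=
  ∃ N : ℝ → ℝ, Negligible N ∧
    Tendsto (fun ε => F ε - N ε) (nhdsWithin 0 (Set.Ioi 0)) (nhds c)

def Nice (F : ℝ → ℝ) : Prop := ∃ c, NeutrixLim F c

lemma negligible_zero : Negligible (fun _ => 0) :=
  ⟨∅, fun _ => 0, ∅, fun _ => 0, by simp, by simp, by simp⟩

lemma negligible_add {N₁ N₂ : ℝ → ℝ} (h₁ : Negligible N₁) (h₂ : Negligible N₂) :
    Negligible (fun ε => N₁ ε + N₂ ε) := by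
  obtain ⟨s₁, c₁, T₁, d₁, hs₁, hT₁, hN₁⟩ := h₁
  obtain ⟨s₂, c₂, T₂, d₂, hs₂, hT₂, hN₂⟩ := h₂
  refine ⟨s₁ ∪ s₂, fun p => (if p ∈ s₁ then c₁ p else 0) + (if p ∈ s₂ then c₂ p else 0),
    T₁ ∪ T₂, fun k => (if k ∈ T₁ then d₁ k else 0) + (if k ∈ T₂ then d₂ k else 0), ?_, ?_, ?_⟩
  · intro p hp; rcases Finset.mem_union.1 hp with h | h
    exacts [hs₁ p h, hs₂ p h]
  · intro k hk; rcases Finset.mem_union.1 hk with h | h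
    exacts [hT₁ k h, hT₂ k h]
  · intro ε
    simp only []
    rw [hN₁ ε, hN₂ ε]
    have e1 : ∀ (s₁ s₂ : Finset (ℝ × ℕ)) (c₁ : ℝ × ℕ → ℝ),
        ∑ p ∈ s₁ ∪ s₂, (if p ∈ s₁ then c₁ p else 0) * ε ^ p.1 * Real.log ε ^ p.2
          = ∑ p ∈ s₁, c₁ p * ε ^ p.1 * Real.log ε ^ p.2 := by
      intro s₁ s₂ c₁
      rw [← Finset.sum_subset (Finset.subset_union_left (s₂ := s₂))]
      · exact Finset.sum_congr rfl (fun p hp => by simp [hp])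
      · intro p _ hp; simp [hp]
    have e2 : ∀ (T₁ T₂ : Finset ℕ) (d₁ : ℕ → ℝ),
        ∑ k ∈ T₁ ∪ T₂, (if k ∈ T₁ then d₁ k else 0) * Real.log ε ^ k
          = ∑ k ∈ T₁, d₁ k * Real.log ε ^ k := by
      intro T₁ T₂ d₁
      rw [← Finset.sum_subset (Finset.subset_union_left (s₂ := T₂))]
      · exact Finset.sum_congr rfl (fun p hp => by simp [hp])
      · intro p _ hp; simp [hp]
    simp only [add_mul, Finset.sum_add_distrib]
    rw [e1 s₁ s₂ c₁, Finset.union_comm s₁ s₂, e1 s₂ s₁ c₂,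
      e2 T₁ T₂ d₁, Finset.union_comm T₁ T₂, e2 T₂ T₁ d₂]
    ring

lemma negligible_smul {N : ℝ → ℝ} (a : ℝ) (h : Negligible N) :
    Negligible (fun ε => a * N ε) := by
  obtain ⟨s, c, T, d, hs, hT, hN⟩ := h
  refine ⟨s, fun p => a * c p, T, fun k => a * d k, hs, hT, fun ε => ?_⟩
  simp only []
  rw [hN ε]; rw [mul_add, Finset.mul_sum, Finset.mul_sum]
  congr 1 <;> exact Finset.sum_congr rfl (fun p _ => by ring)

lemma nice_of_tendsto {F : ℝ → ℝ} {c : ℝ}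
    (h : Tendsto F (nhdsWithin 0 (Set.Ioi 0)) (nhds c)) : Nice F :=
  ⟨c, fun _ => 0, negligible_zero, by simpa using h⟩

lemma nice_congr {F G : ℝ → ℝ} (h : ∀ ε ∈ Set.Ioo (0:ℝ) (1/2), F ε = G ε)
    (hG : Nice G) : Nice F := by
  obtain ⟨c, N, hN, ht⟩ := hG
  refine ⟨c, N, hN, ht.congr' ?_⟩
  filter_upwards [Ioo_mem_nhdsGT_of_mem (by norm_num : (0:ℝ) ∈ Set.Ico (0:ℝ) (1/2))] with ε hε
  rw [h ε hε]

lemma nice_add {F G : ℝ → ℝ} (hF : Nice F) (hG : Nice G) : Nice (fun ε => F ε + G ε) := by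
  obtain ⟨c, N₁, hN₁, h₁⟩ := hF
  obtain ⟨d, N₂, hN₂, h₂⟩ := hG
  refine ⟨c + d, fun ε => N₁ ε + N₂ ε, negligible_add hN₁ hN₂, ?_⟩
  have := h₁.add h₂
  convert this using 2 with ε
  ring

lemma nice_smul {F : ℝ → ℝ} (a : ℝ) (hF : Nice F) : Nice (fun ε => a * F ε) := by
  obtain ⟨c, N, hN, h⟩ := hF
  refine ⟨a * c, fun ε => a * N ε, negligible_smul a hN, ?_⟩
  have := h.const_mul a
  convert this using 2 with ε
  ring

lemma nice_const (a : ℝ) : Nice (fun _ => a) := nice_of_tendsto tendsto_const_nhds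

lemma nice_const_sub {F : ℝ → ℝ} (a : ℝ) (hF : Nice F) : Nice (fun ε => a - F ε) := by
  have := nice_add (nice_const a) (nice_smul (-1) hF)
  convert this using 2 with ε; ring

lemma nice_neg_mono {lam : ℝ} (hl : lam < 0) (k : ℕ) :
    Nice (fun ε : ℝ => ε ^ lam * Real.log ε ^ k) := by
  refine ⟨0, fun ε => ε ^ lam * Real.log ε ^ k,
    ⟨{(lam, k)}, fun _ => 1, ∅, fun _ => 0, ?_, by simp, fun ε => by simp⟩,
    by simpa using tendsto_const_nhds⟩
  intro p hp; simp at hp; subst hp; exact hl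

lemma nice_log_pow (k : ℕ) (hk : 1 ≤ k) : Nice (fun ε : ℝ => Real.log ε ^ k) := by
  refine ⟨0, fun ε => Real.log ε ^ k,
    ⟨∅, fun _ => 0, {k}, fun _ => 1, by simp, ?_, fun ε => by simp⟩,
    by simpa using tendsto_const_nhds⟩
  intro j hj; simp at hj; subst hj; exact hk

lemma tendsto_rpow_log_pow {lam : ℝ} (hl : 0 < lam) (k : ℕ) :
    Tendsto (fun ε : ℝ => ε ^ lam * Real.log ε ^ k) (nhdsWithin 0 (Set.Ioi 0)) (nhds 0) := by
  rcases Nat.eq_zero_or_pos k with hk | hk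
  · subst hk
    have : ContinuousAt (fun ε : ℝ => ε ^ lam) 0 :=
      Real.continuousAt_rpow_const 0 lam (Or.inr hl.le)
    have := this.continuousWithinAt (s := Set.Ioi 0)
    simpa [ContinuousWithinAt, Real.zero_rpow hl.ne'] using this
  · have h1 : Tendsto (fun ε : ℝ => Real.log ε * ε ^ (lam / k)) (nhdsWithin 0 (Set.Ioi 0))
        (nhds 0) := tendsto_log_mul_rpow_nhdsGT_zero (by positivity)
    have h2 : Tendsto (fun ε : ℝ => (Real.log ε * ε ^ (lam / k)) ^ k)
        (nhdsWithin 0 (Set.Ioi 0)) (nhds 0) := by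
      simpa [zero_pow (by omega : k ≠ 0)] using h1.pow k
    refine h2.congr' ?_
    filter_upwards [self_mem_nhdsWithin] with ε (hε : 0 < ε)
    rw [mul_pow, ← Real.rpow_natCast (ε ^ (lam / k)) k, ← Real.rpow_mul hε.le]
    rw [div_mul_cancel₀]
    · ring
    · exact_mod_cast hk.ne'

lemma nice_monomial (lam : ℝ) (k : ℕ) : Nice (fun ε : ℝ => ε ^ lam * Real.log ε ^ k) := by
  rcases lt_trichotomy lam 0 with h | h | h
  · exact nice_neg_mono h k
  · subst h
    rcases Nat.eq_zero_or_pos k with hk | hk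
    · refine nice_of_tendsto (c := 1) ?_
      subst hk
      simp only [Real.rpow_zero, pow_zero, mul_one]
      exact tendsto_const_nhds
    · obtain ⟨c, h⟩ := nice_log_pow k hk
      refine ⟨c, ?_⟩
      simpa only [Real.rpow_zero, one_mul] using h
  · exact nice_of_tendsto (tendsto_rpow_log_pow h k)

lemma antideriv (α : ℝ) (r : ℕ) :
    ∃ H : ℝ → ℝ, Nice H ∧
      ∀ u ∈ Set.Ioo (0:ℝ) 1, HasDerivAt H (u ^ α * Real.log u ^ r) u := by
  rcases eq_or_ne α (-1) with rfl | hα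
  · refine ⟨fun u => Real.log u ^ (r + 1) / (r + 1), ?_, ?_⟩
    · have h1 : Nice (fun ε : ℝ => (1 / ((r:ℝ)+1)) * (ε ^ (0:ℝ) * Real.log ε ^ (r+1))) :=
        nice_smul _ (nice_monomial 0 (r+1))
      refine nice_congr (fun ε hε => ?_) h1
      rw [Real.rpow_zero]; ring
    · intro u hu
      have hu0 : u ≠ 0 := ne_of_gt hu.1
      have h := (Real.hasDerivAt_log hu0).pow (r+1)
      have h2 := h.div_const ((r:ℝ)+1)
      refine h2.congr_deriv ?_
      have : ((r:ℝ)+1) ≠ 0 := by positivity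
      rw [Real.rpow_neg_one]
      simp only [Nat.add_sub_cancel, Nat.cast_add, Nat.cast_one, Pi.pow_apply]
      field_simp
  · induction r with
    | zero =>
      refine ⟨fun u => u ^ (α+1) / (α+1), ?_, ?_⟩
      · have h1 : Nice (fun ε : ℝ => (1/(α+1)) * (ε ^ (α+1) * Real.log ε ^ 0)) :=
          nice_smul _ (nice_monomial (α+1) 0)
        refine nice_congr (fun ε hε => ?_) h1
        rw [pow_zero, mul_one]; ring
      · intro u hu
        have hu0 : u ≠ 0 := ne_of_gt hu.1
        have h := (Real.hasDerivAt_rpow_const (p := α+1) (Or.inl hu0)).div_const (α+1)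
        refine h.congr_deriv ?_
        have hne : α + 1 ≠ 0 := by intro h'; apply hα; linarith
        simp only [add_sub_cancel_right]
        rw [pow_zero, mul_one]
        field_simp
    | succ r ih =>
      obtain ⟨H, hH, hderiv⟩ := ih
      refine ⟨fun u => u ^ (α+1) * Real.log u ^ (r+1) / (α+1)
        - (((r:ℝ)+1)/(α+1)) * H u, ?_, ?_⟩
      · have h1 : Nice (fun ε : ℝ => (1/(α+1)) * (ε ^ (α+1) * Real.log ε ^ (r+1))) :=
          nice_smul _ (nice_monomial (α+1) (r+1))
        have h2 : Nice (fun ε => (-(((r:ℝ)+1)/(α+1))) * H ε) := nice_smul _ hH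
        refine nice_congr (fun ε hε => ?_) (nice_add h1 h2)
        ring
      · intro u hu
        have hu0 : u ≠ 0 := ne_of_gt hu.1
        have hne : α + 1 ≠ 0 := by intro h'; apply hα; linarith
        have ha := (Real.hasDerivAt_rpow_const (p := α+1) (Or.inl hu0)).mul
          ((Real.hasDerivAt_log hu0).pow (r+1))
        have hb := (ha.div_const (α+1)).sub ((hderiv u hu).const_mul (((r:ℝ)+1)/(α+1)))
        refine hb.congr_deriv ?_
        simp only [add_sub_cancel_right, Nat.add_sub_cancel, Nat.cast_add, Nat.cast_one, Pi.pow_apply]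
        rw [Real.rpow_add_one hu0]
        field_simp
        ring

lemma contOn (α : ℝ) (r : ℕ) {s : Set ℝ} (hs : s ⊆ Set.Ioi (0:ℝ)) :
    ContinuousOn (fun u : ℝ => u ^ α * Real.log u ^ r) s := by
  apply ContinuousOn.mul
  · exact fun u hu =>
      (Real.continuousAt_rpow_const u α (Or.inl (ne_of_gt (hs hu)))).continuousWithinAt
  · exact ((Real.continuousOn_log.mono (fun u hu => ne_of_gt (hs hu))).pow r)

lemma integral_Ioo_eq (f : ℝ → ℝ) {a b : ℝ} (hab : a ≤ b) :
    ∫ u in Set.Ioo a b, f u = ∫ u in a..b, f u := by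
  rw [intervalIntegral.integral_of_le hab, ← MeasureTheory.integral_Ioc_eq_integral_Ioo]

lemma nice_integral_monomial (α : ℝ) (r : ℕ) :
    Nice (fun ε => ∫ u in Set.Ioo ε (1/2 : ℝ), u ^ α * Real.log u ^ r) := by
  obtain ⟨H, hH, hderiv⟩ := antideriv α r
  refine nice_congr (G := fun ε => H (1/2) - H ε) (fun ε hε => ?_) (nice_const_sub _ hH)
  have hsub : Set.uIcc ε (1/2 : ℝ) ⊆ Set.Ioi (0:ℝ) := by
    rw [Set.uIcc_of_le hε.2.le]
    intro u hu; exact lt_of_lt_of_le hε.1 hu.1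
  rw [integral_Ioo_eq _ hε.2.le]
  refine intervalIntegral.integral_eq_sub_of_hasDerivAt (fun u hu => ?_) ?_
  · refine hderiv u ⟨hsub hu, ?_⟩
    rw [Set.uIcc_of_le hε.2.le] at hu
    linarith [hu.2]
  · exact (contOn α r hsub).intervalIntegrable

lemma nice_finset_sum {ι : Type*} (t : Finset ι) (f : ι → ℝ → ℝ)
    (h : ∀ i ∈ t, Nice (f i)) : Nice (fun ε => ∑ i ∈ t, f i ε) := by
  classical
  induction t using Finset.induction_on with
  | empty => simpa using nice_const 0
  | insert a t' hni ih =>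
    have h1 : Nice (fun ε => f a ε + ∑ i ∈ t', f i ε) :=
      nice_add (h a (Finset.mem_insert_self a t'))
        (ih (fun i hi => h i (Finset.mem_insert_of_mem hi)))
    refine nice_congr (fun ε _ => ?_) h1
    rw [Finset.sum_insert hni]

theorem stmt7 (x : ℝ) (n r : ℕ) :
    ∃ c : ℝ, NeutrixLim (fun ε => ∫ t in Set.Ioo (1/2 : ℝ) (1 - ε),
      (1 - t) ^ x * Real.log t ^ n * Real.log (1 - t) ^ r) c := by
  -- the function after substitution u = 1 - t
  set φ : ℝ → ℝ := fun u => Real.log (1 - u) ^ n with hφdef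
  set g : ℝ → ℝ := fun u => u ^ x * φ u * Real.log u ^ r with hgdef
  -- analyticity of φ at 0
  have hA : AnalyticAt ℝ (fun u : ℝ => Real.log (1 - u)) 0 := by
    have h1 : AnalyticAt ℂ (fun z : ℂ => Complex.log (1 - z)) 0 :=
      AnalyticAt.clog (analyticAt_const.sub analyticAt_id) (by simp)
    have h2 : AnalyticAt ℝ (fun z : ℂ => Complex.log (1 - z)) 0 := h1.restrictScalars
    have h3 : AnalyticAt ℝ (fun u : ℝ => Complex.log (1 - (u:ℂ))) 0 := by
      have hf : AnalyticAt ℝ (fun u : ℝ => (u:ℂ)) 0 := Complex.ofRealCLM.analyticAt 0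
      have h2' : AnalyticAt ℝ (fun z : ℂ => Complex.log (1 - z)) ((fun u : ℝ => (u:ℂ)) 0) := by
        simpa using h2
      exact h2'.comp hf
    have h4 : AnalyticAt ℝ (fun u : ℝ => (Complex.log (1 - (u:ℂ))).re) 0 :=
      ((Complex.reCLM).analyticAt _).comp h3
    have heq : (fun u : ℝ => (Complex.log (1 - (u:ℂ))).re)
        = fun u : ℝ => Real.log (1 - u) := by
      funext u
      rw [show ((1:ℂ) - (u:ℂ)) = (((1 - u : ℝ)):ℂ) by push_cast; ring,
        Complex.log_ofReal_re]
    rwa [heq] at h4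
  have hφA : AnalyticAt ℝ φ 0 := hA.pow n
  obtain ⟨p, hp⟩ := hφA
  set M : ℕ := ⌈-x⌉₊ + 1 with hM
  have hMx : 0 < (M:ℝ) + x := by
    have := Nat.le_ceil (-x)
    have h2 : ((⌈-x⌉₊ : ℕ) : ℝ) + 1 = (M:ℝ) := by rw [hM]; push_cast; ring
    linarith
  set P : ℝ → ℝ := fun u => p.partialSum M u with hPdef
  set h : ℝ → ℝ := fun u => (φ u - P u) * (u ^ x * Real.log u ^ r) with hhdef
  -- continuity of h on (0, 1/2)
  have hφcont : ContinuousOn φ (Set.Iio (1:ℝ)) := by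
    apply ContinuousOn.pow
    apply Real.continuousOn_log.comp ((continuous_const.sub continuous_id).continuousOn)
    intro u hu
    have : (0:ℝ) < 1 - u := by simp at hu; linarith
    exact ne_of_gt this
  have hhcont : ContinuousOn h (Set.Ioo (0:ℝ) 1) := by
    apply ContinuousOn.mul
    · apply ContinuousOn.sub
      · exact hφcont.mono (fun u hu => hu.2)
      · exact (p.partialSum_continuous M).continuousOn
    · exact contOn x r (fun u hu => hu.1)
  -- bound for h on (0, 1/2)
  have hbdd : ∃ C : ℝ, ∀ u ∈ Set.Ioo (0:ℝ) (1/2), ‖h u‖ ≤ C := by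
    obtain ⟨C₁, hC₁⟩ := (hp.isBigO_sub_partialSum_pow M).bound
    have h2ev : ∀ᶠ u in nhdsWithin (0:ℝ) (Set.Ioi 0),
        |u ^ ((M:ℝ) + x) * Real.log u ^ r| < 1 := by
      have := (tendsto_rpow_log_pow hMx r).abs
      rw [abs_zero] at this
      exact this.eventually_lt_const (by norm_num)
    have hev : ∀ᶠ u in nhdsWithin (0:ℝ) (Set.Ioi 0), ‖h u‖ ≤ |C₁| := by
      filter_upwards [hC₁.filter_mono nhdsWithin_le_nhds, h2ev, self_mem_nhdsWithin]
        with u h1 h2 hu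
      have hu0 : (0:ℝ) < u := hu
      simp only [zero_add, norm_pow, norm_norm] at h1
      have key : ‖u‖ ^ M * ‖u ^ x * Real.log u ^ r‖
          = |u ^ ((M:ℝ) + x) * Real.log u ^ r| := by
        rw [Real.norm_eq_abs, Real.norm_eq_abs, ← abs_pow, ← abs_mul]
        congr 1
        rw [← Real.rpow_natCast u M, ← mul_assoc, ← Real.rpow_add hu0]
      calc ‖h u‖ = ‖φ u - P u‖ * ‖u ^ x * Real.log u ^ r‖ := by
            rw [hhdef]; exact norm_mul _ _
        _ ≤ (C₁ * ‖u‖ ^ M) * ‖u ^ x * Real.log u ^ r‖ :=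
            mul_le_mul_of_nonneg_right h1 (norm_nonneg _)
        _ = C₁ * |u ^ ((M:ℝ) + x) * Real.log u ^ r| := by rw [mul_assoc, key]
        _ ≤ |C₁| * |u ^ ((M:ℝ) + x) * Real.log u ^ r| :=
            mul_le_mul_of_nonneg_right (le_abs_self C₁) (abs_nonneg _)
        _ ≤ |C₁| * 1 := mul_le_mul_of_nonneg_left h2.le (abs_nonneg _)
        _ = |C₁| := mul_one _
    rw [eventually_iff, mem_nhdsGT_iff_exists_Ioo_subset] at hev
    obtain ⟨δ, hδ0, hδ⟩ := hev
    have hδ0' : (0:ℝ) < δ := hδ0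
    set δ' : ℝ := min δ (1/4) with hδ'def
    have hδ'0 : (0:ℝ) < δ' := lt_min hδ0' (by norm_num)
    have hsubc : Set.Icc δ' (1/2:ℝ) ⊆ Set.Ioo (0:ℝ) 1 := by
      intro u hu
      exact ⟨lt_of_lt_of_le hδ'0 hu.1, lt_of_le_of_lt hu.2 (by norm_num)⟩
    obtain ⟨C₂, hC₂⟩ := (isCompact_Icc (a := δ') (b := (1/2:ℝ))).exists_bound_of_continuousOn
      (hhcont.mono hsubc)
    refine ⟨max |C₁| C₂, fun u hu => ?_⟩
    rcases lt_or_ge u δ with hcase | hcase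
    · exact le_trans (hδ ⟨hu.1, hcase⟩) (le_max_left _ _)
    · refine le_trans (hC₂ u ⟨le_trans (min_le_left _ _) hcase, hu.2.le⟩) (le_max_right _ _)
  obtain ⟨C, hC⟩ := hbdd
  -- integrability of h on (0, 1/2)
  have hhint : IntegrableOn h (Set.Ioo (0:ℝ) (1/2)) := by
    constructor
    · exact (hhcont.mono (fun u hu => ⟨hu.1, lt_trans hu.2 (by norm_num)⟩)).aestronglyMeasurable
        measurableSet_Ioo
    · apply MeasureTheory.HasFiniteIntegral.of_bounded (C := C)
      filter_upwards [ae_restrict_mem measurableSet_Ioo] with u hu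
      exact hC u hu
  -- the tail tendsto
  have hG : Tendsto (fun ε => ∫ u in Set.Ioo ε (1/2:ℝ), h u) (nhdsWithin 0 (Set.Ioi 0))
      (nhds (∫ u in Set.Ioo (0:ℝ) (1/2:ℝ), h u)) := by
    have hsplit : ∀ ε ∈ Set.Ioo (0:ℝ) (1/2),
        (∫ u in Set.Ioo ε (1/2:ℝ), h u)
          = (∫ u in Set.Ioo (0:ℝ) (1/2:ℝ), h u) - ∫ u in Set.Ioc (0:ℝ) ε, h u := by
      intro ε hε
      have hunion : Set.Ioc (0:ℝ) ε ∪ Set.Ioo ε (1/2:ℝ) = Set.Ioo (0:ℝ) (1/2:ℝ) :=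
        Set.Ioc_union_Ioo_eq_Ioo hε.1.le hε.2
      have hdisj : Disjoint (Set.Ioc (0:ℝ) ε) (Set.Ioo ε (1/2:ℝ)) :=
        Set.disjoint_left.mpr (fun u h1 h2 => absurd h2.1 (not_lt.mpr h1.2))
      have h1 : IntegrableOn h (Set.Ioc (0:ℝ) ε) :=
        hhint.mono_set (fun u hu => ⟨hu.1, lt_of_le_of_lt hu.2 hε.2⟩)
      have h2 : IntegrableOn h (Set.Ioo ε (1/2:ℝ)) :=
        hhint.mono_set (fun u hu => ⟨lt_trans hε.1 hu.1, hu.2⟩)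
      rw [← hunion, MeasureTheory.setIntegral_union hdisj measurableSet_Ioo h1 h2]
      ring
    have htail : Tendsto (fun ε => ∫ u in Set.Ioc (0:ℝ) ε, h u) (nhdsWithin 0 (Set.Ioi 0))
        (nhds 0) := by
      apply squeeze_zero_norm' (a := fun ε => (max C 0) * ε)
      · filter_upwards [Ioo_mem_nhdsGT_of_mem
          (by norm_num : (0:ℝ) ∈ Set.Ico (0:ℝ) (1/2)), self_mem_nhdsWithin] with ε hε hε'
        have hb : ∀ u ∈ Set.Ioc (0:ℝ) ε, ‖h u‖ ≤ max C 0 := fun u hu =>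
          le_trans (hC u ⟨hu.1, lt_of_le_of_lt hu.2 hε.2⟩) (le_max_left _ _)
        have := MeasureTheory.norm_setIntegral_le_of_norm_le_const
          (by rw [Real.volume_Ioc]; exact ENNReal.ofReal_lt_top) hb
        rw [measureReal_def, Real.volume_Ioc, ENNReal.toReal_ofReal (by linarith [hε.1] : (0:ℝ) ≤ ε - 0)] at this
        simpa using this
      · have : Tendsto (fun ε : ℝ => (max C 0) * ε) (nhds 0) (nhds ((max C 0) * 0)) :=
          (tendsto_id.const_mul _)
        rw [mul_zero] at this
        exact this.mono_left nhdsWithin_le_nhds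
    have := (tendsto_const_nhds (α := ℝ)
      (x := ∫ u in Set.Ioo (0:ℝ) (1/2:ℝ), h u)).sub htail
    rw [sub_zero] at this
    refine this.congr' ?_
    filter_upwards [Ioo_mem_nhdsGT_of_mem (by norm_num : (0:ℝ) ∈ Set.Ico (0:ℝ) (1/2))] with ε hε
    exact (hsplit ε hε).symm
  -- substitution u = 1 - t
  have hstep1 : ∀ ε ∈ Set.Ioo (0:ℝ) (1/2),
      (∫ t in Set.Ioo (1/2:ℝ) (1-ε), (1-t) ^ x * Real.log t ^ n * Real.log (1-t) ^ r)
        = ∫ u in Set.Ioo ε (1/2:ℝ), g u := by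
    intro ε hε
    have h1 : (1/2:ℝ) ≤ 1 - ε := by linarith [hε.2]
    rw [show (∫ t in Set.Ioo (1/2:ℝ) (1-ε), (1-t) ^ x * Real.log t ^ n * Real.log (1-t) ^ r)
        = ∫ t in (1/2:ℝ)..(1-ε), g (1 - t) from ?_]
    · rw [intervalIntegral.integral_comp_sub_left g 1]
      rw [show (1:ℝ) - (1 - ε) = ε by ring, show (1:ℝ) - 1/2 = 1/2 by norm_num]
      rw [integral_Ioo_eq _ hε.2.le]
    · rw [integral_Ioo_eq _ h1]
      apply intervalIntegral.integral_congr
      intro t _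
      simp only [hgdef, hφdef, sub_sub_cancel]
  -- pointwise decomposition of g
  have hdecomp : ∀ u ∈ Set.Ioo (0:ℝ) (1/2),
      g u = (∑ m ∈ Finset.range M, p.coeff m * (u ^ (x + (m:ℝ)) * Real.log u ^ r)) + h u := by
    intro u hu
    have hu0 : (0:ℝ) < u := hu.1
    have hP : P u = ∑ m ∈ Finset.range M, p.coeff m * u ^ m := by
      rw [hPdef]
      unfold FormalMultilinearSeries.partialSum
      exact Finset.sum_congr rfl (fun m _ => by
        rw [FormalMultilinearSeries.apply_eq_pow_smul_coeff, smul_eq_mul]; ring)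
    have hterm : ∀ m ∈ Finset.range M,
        p.coeff m * (u ^ (x + (m:ℝ)) * Real.log u ^ r)
          = (p.coeff m * u ^ m) * (u ^ x * Real.log u ^ r) := by
      intro m _
      rw [Real.rpow_add hu0, Real.rpow_natCast]
      ring
    rw [Finset.sum_congr rfl hterm, ← Finset.sum_mul, ← hP]
    simp only [hgdef, hhdef]
    ring
  -- splitting the integral
  have hsplit2 : ∀ ε ∈ Set.Ioo (0:ℝ) (1/2),
      (∫ u in Set.Ioo ε (1/2:ℝ), g u)
        = (∑ m ∈ Finset.range M,
            p.coeff m * ∫ u in Set.Ioo ε (1/2:ℝ), u ^ (x + (m:ℝ)) * Real.log u ^ r)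
          + ∫ u in Set.Ioo ε (1/2:ℝ), h u := by
    intro ε hε
    have hsub : Set.Ioo ε (1/2:ℝ) ⊆ Set.Ioo (0:ℝ) (1/2) :=
      fun u hu => ⟨lt_trans hε.1 hu.1, hu.2⟩
    have hsubI : Set.Icc ε (1/2:ℝ) ⊆ Set.Ioi (0:ℝ) :=
      fun u hu => lt_of_lt_of_le hε.1 hu.1
    have hint1 : ∀ m : ℕ, IntegrableOn
        (fun u => u ^ (x + (m:ℝ)) * Real.log u ^ r) (Set.Ioo ε (1/2:ℝ)) := fun m =>
      ((contOn _ _ hsubI).integrableOn_compact isCompact_Icc).mono_set Set.Ioo_subset_Icc_self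
    have hinth : IntegrableOn h (Set.Ioo ε (1/2:ℝ)) := hhint.mono_set hsub
    rw [MeasureTheory.setIntegral_congr_fun measurableSet_Ioo
      (fun u hu => hdecomp u (hsub hu))]
    rw [MeasureTheory.integral_add (MeasureTheory.integrable_finset_sum _
      (fun m _ => (hint1 m).const_mul _)) hinth]
    congr 1
    rw [MeasureTheory.integral_finset_sum _ (fun m _ => (hint1 m).const_mul _)]
    exact Finset.sum_congr rfl (fun m _ => MeasureTheory.integral_const_mul _ _)
  -- assemble
  have hnice : Nice (fun ε => ∫ t in Set.Ioo (1/2:ℝ) (1-ε),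
      (1-t) ^ x * Real.log t ^ n * Real.log (1-t) ^ r) := by
    refine nice_congr (fun ε hε => (hstep1 ε hε).trans (hsplit2 ε hε)) ?_
    refine nice_add (nice_finset_sum _ _ (fun m _ => ?_)) (nice_of_tendsto hG)
    exact nice_smul _ (nice_integral_monomial (x + (m:ℝ)) r)
  exact hnice
end

section
/- For every integer m ≥ 0 and every ε ∈ (0,1), ∫_ε^1 (1 − t^{−m−1})/(1−t) dt = log ε + Σ_{j=1}^m (1 − ε^{−j})/j; consequently the neutrix limit as ε → 0⁺ of ∫_ε^1 (1 − t^{−m−1})/(1−t) dt equals the harmonic number H_m = Σ_{j=1}^m 1/j. -/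
open MeasureTheory Real Filter Set

lemma aux_pointwise (m : ℕ) {t : ℝ} (ht0 : t ≠ 0) (ht1 : t ≠ 1) :
    (1 - (t ^ (m+1))⁻¹) / (1 - t) = -∑ k ∈ Finset.Icc 1 (m+1), (t ^ k)⁻¹ := by
  have h1t : 1 - t ≠ 0 := sub_ne_zero_of_ne ht1.symm
  induction m with
  | zero =>
    simp only [zero_add, Finset.Icc_self, Finset.sum_singleton, pow_one]
    field_simp
    ring
  | succ n ih =>
    rw [Finset.sum_Icc_succ_top (by omega)]
    have hS : ∑ k ∈ Finset.Icc 1 (n+1), (t ^ k)⁻¹ = -((1 - (t ^ (n+1))⁻¹) / (1 - t)) := by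
      rw [ih, neg_neg]
    rw [hS]
    field_simp
    ring

lemma aux_int_inv {ε : ℝ} (hε0 : 0 < ε) (hε1 : ε ≤ 1) :
    ∫ t in ε..1, t ^ (-((1:ℕ):ℝ)) = -Real.log ε := by
  have h0 : (0:ℝ) ∉ Set.uIcc ε 1 := by
    rw [Set.uIcc_of_le hε1]
    rintro ⟨h, -⟩; linarith
  have : ∀ t : ℝ, t ^ (-((1:ℕ):ℝ)) = t⁻¹ := by
    intro t
    rw [show (-((1:ℕ):ℝ)) = ((-1:ℤ):ℝ) by norm_num, Real.rpow_intCast, zpow_neg_one]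
  simp only [this]
  rw [integral_inv h0, one_div, Real.log_inv]

lemma aux_int_k {ε : ℝ} (hε0 : 0 < ε) (hε1 : ε ≤ 1) (k : ℕ) (hk : 2 ≤ k) :
    ∫ t in ε..1, t ^ (-(k:ℝ)) = (1 - ε ^ (-((k:ℝ) - 1))) / (-((k:ℝ) - 1)) := by
  have h0 : (0:ℝ) ∉ Set.uIcc ε 1 := by
    rw [Set.uIcc_of_le hε1]
    rintro ⟨h, -⟩; linarith
  have hk' : (2:ℝ) ≤ (k:ℝ) := by exact_mod_cast hk
  rw [integral_rpow (Or.inr ⟨by intro h; linarith, h0⟩)]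
  rw [Real.one_rpow]
  ring_nf

lemma aux_sum_int (m : ℕ) {ε : ℝ} (hε0 : 0 < ε) (hε1 : ε ≤ 1) :
    ∑ k ∈ Finset.Icc 1 (m+1), ∫ t in ε..1, t ^ (-(k:ℝ))
      = -Real.log ε - ∑ j ∈ Finset.Icc 1 m, (1 - ε ^ (-(j:ℝ))) / (j:ℝ) := by
  induction m with
  | zero =>
    simp only [zero_add, Finset.Icc_self, Finset.sum_singleton, Finset.Icc_eq_empty_of_lt
      Nat.zero_lt_one, Finset.sum_empty, sub_zero]
    exact aux_int_inv hε0 hε1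
  | succ n ih =>
    rw [Finset.sum_Icc_succ_top (a := 1) (b := n + 1) (by omega), ih,
        Finset.sum_Icc_succ_top (a := 1) (b := n) (by omega),
        show ((n:ℕ)+1+1 : ℕ) = n+2 from rfl, aux_int_k hε0 hε1 (n+2) (by omega)]
    push_cast
    rw [show -(((n:ℝ)+2)-1) = -1 - (n:ℝ) by ring, show -((n:ℝ)+1) = -1 - (n:ℝ) by ring]
    have h : ((n:ℝ)+1) ≠ 0 := by positivity
    have h2 : (-1 - (n:ℝ)) ≠ 0 := by
      have : (0:ℝ) ≤ (n:ℝ) := Nat.cast_nonneg n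
      intro hc; linarith
    field_simp
    ring

lemma aux_integrable {ε : ℝ} (hε0 : 0 < ε) (hε1 : ε ≤ 1) (k : ℕ) :
    IntervalIntegrable (fun t : ℝ => t ^ (-(k:ℝ))) volume ε 1 := by
  apply intervalIntegral.intervalIntegrable_rpow
  right
  rw [Set.uIcc_of_le hε1]
  rintro ⟨h, -⟩; linarith

lemma aux_main (m : ℕ) {ε : ℝ} (hε : ε ∈ Set.Ioo (0:ℝ) 1) :
    ∫ t in Set.Ioo ε 1, (1 - t ^ (-(m : ℝ) - 1)) / (1 - t) =
      Real.log ε + ∑ j ∈ Finset.Icc 1 m, (1 - ε ^ (-(j : ℝ))) / (j : ℝ) := by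
  obtain ⟨hε0, hε1⟩ := hε
  have heq : Set.EqOn (fun t : ℝ => (1 - t ^ (-(m : ℝ) - 1)) / (1 - t))
      (fun t : ℝ => -∑ k ∈ Finset.Icc 1 (m+1), t ^ (-(k:ℝ))) (Set.Ioo ε 1) := by
    intro t ht
    obtain ⟨ht0, ht1⟩ := ht
    have ht0' : (0:ℝ) < t := lt_trans hε0 ht0
    have hpt : (1 - (t ^ (m+1))⁻¹) / (1 - t) = -∑ k ∈ Finset.Icc 1 (m+1), (t ^ k)⁻¹ :=
      aux_pointwise m (ne_of_gt ht0') (ne_of_lt ht1)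
    simp only
    have hrw : ∀ k : ℕ, t ^ (-(k:ℝ)) = (t ^ k)⁻¹ := fun k => by
      rw [Real.rpow_neg ht0'.le, Real.rpow_natCast]
    have hexp : t ^ (-(m:ℝ) - 1) = (t ^ (m+1))⁻¹ := by
      rw [show -(m:ℝ) - 1 = -(((m+1 : ℕ)):ℝ) by push_cast; ring, hrw]
    rw [hexp, hpt]
    congr 1
    exact Finset.sum_congr rfl fun k _ => (hrw k).symm
  rw [MeasureTheory.setIntegral_congr_fun measurableSet_Ioo heq,
    ← MeasureTheory.integral_Ioc_eq_integral_Ioo,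
    ← intervalIntegral.integral_of_le hε1.le, intervalIntegral.integral_neg,
    intervalIntegral.integral_finset_sum (fun k _ => aux_integrable hε0 hε1.le k),
    aux_sum_int m hε0 hε1.le]
  ring

theorem stmt15 (m : ℕ) :
    (∀ ε ∈ Set.Ioo (0 : ℝ) 1,
      ∫ t in Set.Ioo ε 1, (1 - t ^ (-(m : ℝ) - 1)) / (1 - t) =
        Real.log ε + ∑ j ∈ Finset.Icc 1 m, (1 - ε ^ (-(j : ℝ))) / (j : ℝ)) ∧
    NeutrixLim (fun ε => ∫ t in Set.Ioo ε 1, (1 - t ^ (-(m : ℝ) - 1)) / (1 - t))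
      (∑ j ∈ Finset.Icc 1 m, (1 : ℝ) / (j : ℝ)) := by
  refine ⟨fun ε hε => aux_main m hε, ?_⟩
  refine ⟨fun ε => Real.log ε + ∑ j ∈ Finset.Icc 1 m, (1 / (-(j:ℝ))) * ε ^ (-(j:ℝ)), ?_, ?_⟩
  · refine ⟨(Finset.Icc 1 m).image (fun j : ℕ => ((-(j:ℝ)), (0:ℕ))), fun p => 1 / p.1, {1},
      fun _ => 1, ?_, ?_, ?_⟩
    · intro p hp
      simp only [Finset.mem_image] at hp
      obtain ⟨j, hj, rfl⟩ := hp
      have : 1 ≤ j := (Finset.mem_Icc.mp hj).1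
      simp only
      have : (1:ℝ) ≤ (j:ℝ) := by exact_mod_cast this
      linarith
    · intro k hk
      simp only [Finset.mem_singleton] at hk
      omega
    · intro ε
      rw [Finset.sum_image (by
        intro a _ b _ h
        have := (Prod.mk.injEq _ _ _ _).mp h
        exact_mod_cast neg_injective this.1)]
      simp only [pow_zero, mul_one, Finset.sum_singleton, pow_one, one_mul]
      rw [add_comm]
  · have hconst : ∀ ε ∈ Set.Ioo (0:ℝ) 1,
        (∫ t in Set.Ioo ε 1, (1 - t ^ (-(m : ℝ) - 1)) / (1 - t)) -
          (Real.log ε + ∑ j ∈ Finset.Icc 1 m, (1 / (-(j:ℝ))) * ε ^ (-(j:ℝ)))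
        = ∑ j ∈ Finset.Icc 1 m, (1 : ℝ) / (j : ℝ) := by
      intro ε hε
      rw [aux_main m hε]
      rw [add_sub_add_left_eq_sub, ← Finset.sum_sub_distrib]
      refine Finset.sum_congr rfl fun j hj => ?_
      have hj1 : 1 ≤ j := (Finset.mem_Icc.mp hj).1
      rw [show (1:ℝ)/(-(j:ℝ)) * ε ^ (-(j:ℝ)) = -(ε ^ (-(j:ℝ))/j) by ring,
        sub_neg_eq_add, ← add_div, sub_add_cancel]
    refine tendsto_const_nhds.congr' ?_
    filter_upwards [Ioo_mem_nhdsGT_of_mem ⟨le_refl (0:ℝ), one_pos⟩] with ε hε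
    exact (hconst ε hε).symm
end
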